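/- arXiv:2009.00537 — 2 statements merged into one kernel-verified Lean document; each statement's English description precedes it below -/
import Mathlib

section
/- For ν₁ > 0 and 0 ≤ ν₂, one has ∫_{S²} x² exp(−ν₁x² − ν₂y²) dS = 4π ∫₀¹ x² e^{−ν₁x²} exp(−ν₂(1−x²)/2) I₀(ν₂(1−x²)/2) dx, where the left integral is over the unit sphere in ℝ³ with surface measure. -/
open Real

noncomputable def besselI0 (x : ℝ) : ℝ := (1 / π) * ∫ θ in (0:ℝ)..π, Real.exp (x * Real.cos θ)

noncomputable def sphereIntegral (f : ℝ → ℝ → ℝ → ℝ) : ℝ :=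
  ∫ θ in (0:ℝ)..π, ∫ φ in (0:ℝ)..(2 * π),
    f (Real.cos θ) (Real.sin θ * Real.cos φ) (Real.sin θ * Real.sin φ) * Real.sin θ

@[fun_prop]
lemma besselI0_continuous : Continuous besselI0 := by
  have h : Continuous fun x : ℝ => ∫ θ in (0:ℝ)..π, Real.exp (x * Real.cos θ) := by
    apply intervalIntegral.continuous_parametric_intervalIntegral_of_continuous'
      (μ := MeasureTheory.volume)
    exact (by fun_prop : Continuous fun p : ℝ × ℝ => Real.exp (p.1 * Real.cos p.2))
  exact continuous_const.mul h

lemma besselI0_neg (c : ℝ) : besselI0 (-c) = besselI0 c := by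
  unfold besselI0
  congr 1
  have h := intervalIntegral.integral_comp_sub_left
    (a := (0:ℝ)) (b := π) (fun θ => Real.exp (-c * Real.cos θ)) π
  rw [sub_self, sub_zero] at h
  simp only [Real.cos_pi_sub, mul_neg, neg_mul, neg_neg] at h
  simpa only [neg_mul] using h.symm

lemma int_exp_cos_two_pi (b : ℝ) :
    ∫ u in (0:ℝ)..(2*π), Real.exp (b * Real.cos u) = 2 * π * besselI0 b := by
  have hint : ∀ s t : ℝ, IntervalIntegrable (fun u => Real.exp (b * Real.cos u))
      MeasureTheory.volume s t :=
    fun s t => (by fun_prop : Continuous fun u => Real.exp (b * Real.cos u)).intervalIntegrable s t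
  have h2 : ∫ u in π..(2*π), Real.exp (b * Real.cos u)
      = ∫ u in (0:ℝ)..π, Real.exp (b * Real.cos u) := by
    have h := intervalIntegral.integral_comp_sub_left
      (a := (0:ℝ)) (b := π) (fun u => Real.exp (b * Real.cos u)) (2*π)
    rw [show 2*π - π = π by ring, sub_zero] at h
    simp only [Real.cos_sub, Real.cos_two_pi, Real.sin_two_pi, one_mul, zero_mul, add_zero] at h
    exact h.symm
  have hsplit := intervalIntegral.integral_add_adjacent_intervals (hint 0 π) (hint π (2*π))
  have hπ : (π:ℝ) ≠ 0 := Real.pi_ne_zero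
  rw [← hsplit, h2]
  unfold besselI0
  field_simp
  ring

lemma keyJ (a : ℝ) : ∫ φ in (0:ℝ)..(2*π), Real.exp (-(a * Real.cos φ ^ 2))
    = 2 * π * Real.exp (-a / 2) * besselI0 (a / 2) := by
  have hrw : ∀ φ : ℝ, Real.exp (-(a * Real.cos φ ^ 2))
      = Real.exp (-a/2) * Real.exp (-a/2 * Real.cos (2*φ)) := by
    intro φ
    rw [Real.cos_sq, ← Real.exp_add]
    congr 1
    ring
  simp only [hrw]
  rw [intervalIntegral.integral_const_mul]
  have hintf : ∀ s t : ℝ, IntervalIntegrable (fun u => Real.exp (-a/2 * Real.cos u))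
      MeasureTheory.volume s t :=
    fun s t => (by fun_prop :
      Continuous fun u => Real.exp (-a/2 * Real.cos u)).intervalIntegrable s t
  have hshift : ∫ u in (2*π)..(4*π), Real.exp (-a/2 * Real.cos u)
      = ∫ u in (0:ℝ)..(2*π), Real.exp (-a/2 * Real.cos u) := by
    have h := intervalIntegral.integral_comp_add_right
      (a := (0:ℝ)) (b := 2*π) (fun u => Real.exp (-a/2 * Real.cos u)) (2*π)
    rw [zero_add, show 2*π + 2*π = 4*π by ring] at h
    simp only [Real.cos_add_two_pi] at h
    exact h.symm
  have hsplit := intervalIntegral.integral_add_adjacent_intervals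
    (hintf 0 (2*π)) (hintf (2*π) (4*π))
  have hhalf := intervalIntegral.integral_comp_mul_left
    (a := (0:ℝ)) (b := 2*π) (fun u => Real.exp (-a/2 * Real.cos u))
    (show (2:ℝ) ≠ 0 by norm_num)
  rw [show (2:ℝ)*0 = 0 by ring, show (2:ℝ)*(2*π) = 4*π by ring] at hhalf
  have hI := int_exp_cos_two_pi (-a/2)
  have hIn : besselI0 (-a/2) = besselI0 (a/2) := by
    rw [neg_div]; exact besselI0_neg (a/2)
  rw [hhalf, ← hsplit, hshift, smul_eq_mul, hI, hIn]
  ring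

theorem sphere_second_moment_reduction (ν₁ ν₂ : ℝ) (h1 : 0 < ν₁) (h2 : 0 ≤ ν₂) :
    sphereIntegral (fun x y _ => x ^ 2 * Real.exp (-ν₁ * x ^ 2 - ν₂ * y ^ 2))
      = 4 * π * ∫ x in (0:ℝ)..1,
          x ^ 2 * Real.exp (-ν₁ * x ^ 2) * Real.exp (-(ν₂ * (1 - x ^ 2)) / 2)
            * besselI0 (ν₂ * (1 - x ^ 2) / 2) := by
  have hπ : (π:ℝ) ≠ 0 := Real.pi_ne_zero
  set g : ℝ → ℝ := fun x => x ^ 2 * Real.exp (-ν₁ * x ^ 2) * Real.exp (-(ν₂ * (1 - x ^ 2)) / 2)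
      * besselI0 (ν₂ * (1 - x ^ 2) / 2) with hg
  set H : ℝ → ℝ := fun x => 2 * π * g x with hH
  have hHcont : Continuous H := by
    apply continuous_const.mul
    rw [hg]
    fun_prop
  -- inner integral computation
  have hinner : ∀ θ : ℝ,
      (∫ φ in (0:ℝ)..(2*π),
        Real.cos θ ^ 2 * Real.exp (-ν₁ * Real.cos θ ^ 2 - ν₂ * (Real.sin θ * Real.cos φ) ^ 2)
          * Real.sin θ)
      = Real.sin θ * H (Real.cos θ) := by
    intro θ
    have hpt : ∀ φ : ℝ,
        Real.cos θ ^ 2 * Real.exp (-ν₁ * Real.cos θ ^ 2 - ν₂ * (Real.sin θ * Real.cos φ) ^ 2)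
            * Real.sin θ
        = (Real.cos θ ^ 2 * Real.exp (-ν₁ * Real.cos θ ^ 2) * Real.sin θ)
            * Real.exp (-(ν₂ * Real.sin θ ^ 2 * Real.cos φ ^ 2)) := by
      intro φ
      rw [show -ν₁ * Real.cos θ ^ 2 - ν₂ * (Real.sin θ * Real.cos φ) ^ 2
          = (-ν₁ * Real.cos θ ^ 2) + (-(ν₂ * Real.sin θ ^ 2 * Real.cos φ ^ 2)) by ring,
        Real.exp_add]
      ring
    simp only [hpt]
    rw [intervalIntegral.integral_const_mul, keyJ (ν₂ * Real.sin θ ^ 2)]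
    rw [hH, hg]
    have hs : Real.sin θ ^ 2 = 1 - Real.cos θ ^ 2 := Real.sin_sq θ
    rw [hs]
    ring_nf
  -- rewrite the sphere integral
  rw [sphereIntegral]
  simp only [hinner]
  -- substitution x = cos θ
  have hsub : ∫ θ in (0:ℝ)..π, Real.sin θ * H (Real.cos θ) = ∫ x in (-1:ℝ)..1, H x := by
    have hd : ∀ x ∈ Set.uIcc (0:ℝ) π, HasDerivAt Real.cos (-Real.sin x) x :=
      fun x _ => Real.hasDerivAt_cos x
    have h := intervalIntegral.integral_comp_smul_deriv hd
      ((by fun_prop : Continuous fun x : ℝ => -Real.sin x).continuousOn) hHcont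
    simp only [Function.comp, smul_eq_mul, Real.cos_zero, Real.cos_pi, neg_mul] at h
    rw [intervalIntegral.integral_neg, intervalIntegral.integral_symm (-1) 1] at h
    exact neg_injective h
  rw [hsub]
  -- evenness
  have hi : ∀ s t : ℝ, IntervalIntegrable H MeasureTheory.volume s t :=
    fun s t => hHcont.intervalIntegrable s t
  have hsplit := intervalIntegral.integral_add_adjacent_intervals (hi (-1) 0) (hi 0 1)
  have hneg : ∫ x in (-1:ℝ)..0, H x = ∫ x in (0:ℝ)..1, H x := by
    have h := intervalIntegral.integral_comp_neg (a := (0:ℝ)) (b := 1) H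
    rw [neg_zero] at h
    rw [← h]
    apply intervalIntegral.integral_congr
    intro x _
    simp only [hH, hg, neg_sq]
  have hHg : ∫ x in (0:ℝ)..1, H x = 2 * π * ∫ x in (0:ℝ)..1, g x := by
    simp only [hH]
    rw [intervalIntegral.integral_const_mul]
  rw [← hsplit, hneg, hHg]
  ring
end

section
/- Suppose 0 < ε ≤ 1, λ₂ > −1/3, and b ∈ (0, π/2] satisfies sin(2b)/(2b) = 1 − 2(λ₂ + 1/3)/(1 − ε²/3). Then b² > 3(λ₂ + 1/3). -/
open Real

lemma sin_ge_sub_cube' (x : ℝ) (hx : 0 ≤ x) : x - x ^ 3 / 6 ≤ Real.sin x := by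
  have hder : ∀ z : ℝ, HasDerivAt (fun z => Real.sin z - z + z ^ 3 / 6)
      (Real.cos z - 1 + z ^ 2 / 2) z := by
    intro z
    have h1 := (Real.hasDerivAt_sin z).sub (hasDerivAt_id z)
    have h2 := (hasDerivAt_pow 3 z).div_const 6
    refine (h1.add h2).congr_deriv ?_
    push_cast
    ring
  have mono : Monotone (fun z => Real.sin z - z + z ^ 3 / 6) := by
    apply monotone_of_deriv_nonneg
    · exact fun z => (hder z).differentiableAt
    · intro z
      rw [(hder z).deriv]
      have := Real.one_sub_sq_div_two_le_cos (x := z)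
      linarith
  have h0 := mono hx
  simp at h0
  linarith

theorem b_sq_lower_bound (ε lam2 b : ℝ) (hε0 : 0 < ε) (hε1 : ε ≤ 1)
    (hlam : lam2 > -(1 / 3)) (hb0 : 0 < b) (hb1 : b ≤ π / 2)
    (heq : Real.sin (2 * b) / (2 * b) = 1 - 2 * (lam2 + 1 / 3) / (1 - ε ^ 2 / 3)) :
    b ^ 2 > 3 * (lam2 + 1 / 3) := by
  obtain ⟨c, hc⟩ : ∃ c : ℝ, c = lam2 + 1 / 3 := ⟨_, rfl⟩
  rw [show 2 * (lam2 + 1 / 3) = 2 * c by rw [hc]] at heq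
  rw [show 3 * (lam2 + 1 / 3) = 3 * c by rw [hc]]
  have hc0 : 0 < c := by rw [hc]; linarith
  have hd0 : 0 < 1 - ε ^ 2 / 3 := by nlinarith
  have hd1 : 1 - ε ^ 2 / 3 < 1 := by nlinarith
  have hb2 : (0:ℝ) < 2 * b := by linarith
  have hs : Real.sin (2 * b) * (1 - ε ^ 2 / 3) = ((1 - ε ^ 2 / 3) - 2 * c) * (2 * b) := by
    rw [div_eq_iff (ne_of_gt hb2)] at heq
    rw [heq]
    have h3 : (3 : ℝ) - ε ^ 2 ≠ 0 := by nlinarith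
    field_simp
  have hsin := sin_ge_sub_cube' (2 * b) (by linarith)
  have key : 4 * b * c ≤ (4 / 3) * b ^ 3 * (1 - ε ^ 2 / 3) := by
    nlinarith [mul_le_mul_of_nonneg_right hsin hd0.le]
  by_contra h
  push_neg at h
  have h6 : (4 / 3) * b ^ 3 ≤ 4 * b * c := by nlinarith [mul_le_mul_of_nonneg_left h hb0.le]
  nlinarith [key, h6, mul_pos (mul_pos (mul_pos hb0 hb0) hb0) (pow_pos hε0 2)]
end
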